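/- Let hs and hc be well-formed alternating histories in which every invocation has a matching response, with hc ≡ hs; identify operation calls across the two histories via their positions in the per-transaction projections. Call a pair of operation calls (o, o') mis-ordered if o ≺≺_hs o' and o' ≺≺_hc o. If some mis-ordered pair exists, then any mis-ordered pair (o_t, o_{t'}) minimizing the number of events strictly between o_t and o_{t'} in hs satisfies: the transactions t of o_t and t' of o_{t'} are distinct, and no event strictly between o_t and o_{t'} in hs belongs to transaction t or to transaction t'. -/

import Mathlib

namespace TM

/-- Events of a TM implementation: invocations and responses. -/
inductive Event (T A V : Type) where
  | invBegin  (t : T)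
  | invCommit (t : T)
  | invRead   (t : T) (a : A)
  | invWrite  (t : T) (a : A) (v : V)
  | respBegin  (t : T)
  | respCommit (t : T)
  | respRead   (t : T) (v : V)
  | respWrite  (t : T)
  | respAbort  (t : T)
  deriving DecidableEq

namespace Event

/-- The transaction an event belongs to. -/
def tx {T A V : Type} : Event T A V → T
  | invBegin t => t
  | invCommit t => t
  | invRead t _ => t
  | invWrite t _ _ => t
  | respBegin t => t
  | respCommit t => t
  | respRead t _ => t
  | respWrite t => t
  | respAbort t => t

/-- Is the event an invocation? -/
def isInv {T A V : Type} : Event T A V → Bool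
  | invBegin _ => true
  | invCommit _ => true
  | invRead _ _ => true
  | invWrite _ _ _ => true
  | _ => false

/-- Is the event a response? -/
def isResp {T A V : Type} (e : Event T A V) : Bool := !e.isInv

end Event

/-- An invocation together with a matching response. -/
inductive Matches {T A V : Type} : Event T A V → Event T A V → Prop where
  | beginOk (t : T) : Matches (.invBegin t) (.respBegin t)
  | commitOk (t : T) : Matches (.invCommit t) (.respCommit t)
  | commitAbort (t : T) : Matches (.invCommit t) (.respAbort t)
  | readOk (t : T) (a : A) (v : V) : Matches (.invRead t a) (.respRead t v)
  | readAbort (t : T) (a : A) : Matches (.invRead t a) (.respAbort t)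
  | writeOk (t : T) (a : A) (v : V) : Matches (.invWrite t a v) (.respWrite t)
  | writeAbort (t : T) (a : A) (v : V) : Matches (.invWrite t a v) (.respAbort t)

variable {T A V : Type}

section Histories
variable [DecidableEq T]

/-- `proj h t` is `h|t`, the subsequence of events of transaction `t`. -/
def proj (h : List (Event T A V)) (t : T) : List (Event T A V) :=
  h.filter (fun e => decide (e.tx = t))

/-- An alternating sequence of invocations and matching responses, beginning with
an invocation and possibly ending with an invocation. -/
inductive Alternating : List (Event T A V) → Prop where
  | nil : Alternating []
  | single (e : Event T A V) : e.isInv = true → Alternating [e]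
  | cons (i r : Event T A V) (rest : List (Event T A V)) :
      i.isInv = true → Matches i r → Alternating rest → Alternating (i :: r :: rest)

/-- Well-formedness of the projection `l = h|t`. -/
def WfProj (t : T) (l : List (Event T A V)) : Prop :=
  l = [] ∨ (l.head? = some (.invBegin t) ∧
    ∀ i, 0 < i → i + 1 < l.length →
      l[i]? ≠ some (.respBegin t) ∧ l[i]? ≠ some (.respCommit t) ∧
      l[i]? ≠ some (.respAbort t))

/-- A history is well-formed if every projection is alternating and well-formed. -/
def WellFormed (h : List (Event T A V)) : Prop :=
  ∀ t : T, Alternating (proj h t) ∧ WfProj t (proj h t)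

def Committed (h : List (Event T A V)) (t : T) : Prop :=
  (proj h t).getLast? = some (.respCommit t)

def Aborted (h : List (Event T A V)) (t : T) : Prop :=
  (proj h t).getLast? = some (.respAbort t)

def Finished (h : List (Event T A V)) (t : T) : Prop := Committed h t ∨ Aborted h t

/-- `h ≡ h'` iff `h|t = h'|t` for all transactions `t`. -/
def Equiv (h h' : List (Event T A V)) : Prop := ∀ t : T, proj h t = proj h' t

/-- Real-time order on transactions: `t` is finished and the last event of `t`
precedes the first event of `t'`. -/
def TransPrec (h : List (Event T A V)) (t t' : T) : Prop :=
  Finished h t ∧ (∃ e ∈ h, e.tx = t') ∧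
    ∀ (i j : ℕ) (e e' : Event T A V), h[i]? = some e → h[j]? = some e' →
      e.tx = t → e'.tx = t' → i < j

/-- Positions (in `h`) of the events of transaction `t`, in order. -/
def txPositions (h : List (Event T A V)) (t : T) : List ℕ :=
  (List.range h.length).filter (fun i => decide ((h[i]?).map Event.tx = some t))

/-- Real-time order on operation calls. An operation call is identified by its
transaction together with its index `k` within `h|t`: its invocation is the
`2k`-th event of `t` and its response the `2k+1`-th event of `t`.
`OpPrec h o o'` holds iff the response of `o` precedes the invocation of `o'`. -/
def OpPrec (h : List (Event T A V)) (o o' : T × ℕ) : Prop :=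
  ∃ i j, (txPositions h o.1)[2 * o.2 + 1]? = some i ∧
    (txPositions h o'.1)[2 * o'.2]? = some j ∧ i < j

/-- Helper for `complete`, processing the reversed history; an invocation whose
transaction has no later event is pending and gets removed. -/
def completeRev : List (Event T A V) → List T → List (Event T A V)
  | [], _ => []
  | e :: rest, seen =>
    if e.isInv && !(seen.contains e.tx) then completeRev rest (e.tx :: seen)
    else e :: completeRev rest (e.tx :: seen)

/-- `[h]`: the history `h` with all pending invocations removed. -/
def complete (h : List (Event T A V)) : List (Event T A V) :=
  (completeRev h.reverse []).reverse

/-- `Extends h he`: `he` is obtained from `h` by appending matching responses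
for some of the pending invocations of `h`. -/
def Extends (h he : List (Event T A V)) : Prop :=
  ∃ rs : List (Event T A V), he = h ++ rs ∧
    rs.Pairwise (fun r r' => r.tx ≠ r'.tx) ∧
    ∀ r ∈ rs, r.isResp = true ∧ ∃ i, (proj h r.tx).getLast? = some i ∧ Matches i r

/-- Non-interleaved history: transactions do not overlap. -/
def NonInterleaved (h : List (Event T A V)) : Prop :=
  ∀ (h1 h2 h3 : List (Event T A V)) (p q : T),
    h = h1 ++ Event.invBegin p :: h2 ++ Event.invBegin q :: h3 →
    (∀ t : T, Event.invBegin t ∉ h2) →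
    (Event.respCommit p ∈ h2 ∨ Event.respAbort p ∈ h2 ∨ ∀ e ∈ h3, e.tx ≠ p)

section Valid
variable [DecidableEq A] [DecidableEq V] [Zero V]

/-- Memory evolution for one invocation/response pair. -/
def stepOk (σ σ' : A → V) : Event T A V → Event T A V → Prop
  | .invWrite _ a v, .respWrite _ => σ' = Function.update σ a v
  | .invRead _ a, .respRead _ v => σ a = v ∧ σ' = σ
  | _, _ => σ' = σ

/-- Valid history: an alternating sequence of invocations and matching responses
consistent with a sequence of memory states starting at the all-zero memory. -/
def Valid (h : List (Event T A V)) : Prop :=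
  ∃ (n : ℕ) (σ : ℕ → A → V), h.length = 2 * n ∧ (∀ a, σ 0 a = (0 : V)) ∧
    ∀ i < n, ∃ ei er : Event T A V, h[2 * i]? = some ei ∧ h[2 * i + 1]? = some er ∧
      ei.isInv = true ∧ Matches ei er ∧ stepOk (σ i) (σ (i + 1)) ei er

/-- `hs` is legal at index `idx`: the projection of `hs[0..idx-1]` onto events of
committed transactions plus events of the transaction of `hs(idx)` is valid. -/
def LegalAt (hs : List (Event T A V)) (idx : ℕ) : Prop :=
  ∀ e : Event T A V, hs[idx]? = some e →
    Valid ((hs.take idx).filter (fun e' =>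
      decide ((proj (hs.take idx) e'.tx).getLast? = some (Event.respCommit e'.tx)) ||
      decide (e'.tx = e.tx)))

def Legal (hs : List (Event T A V)) : Prop := ∀ idx, LegalAt hs idx

/-- Sequential history: well-formed, non-interleaved and legal. -/
def Sequential (hs : List (Event T A V)) : Prop :=
  WellFormed hs ∧ NonInterleaved hs ∧ Legal hs

/-- End-to-end opacity. -/
def EndToEndOpaque (h : List (Event T A V)) : Prop :=
  ∃ he, Extends h he ∧ ∃ hs, Sequential hs ∧ Equiv (complete he) hs ∧
    ∀ t t' : T, TransPrec (complete he) t t' → TransPrec hs t t'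

/-- Opacity: every prefix is end-to-end opaque. -/
def Opaque (h : List (Event T A V)) : Prop :=
  ∀ h', h' <+: h → EndToEndOpaque h'

/-- `Lin h ha`: `[h] ≡ ha` and `≺≺_[h] ⊆ ≺≺_ha`. -/
def Lin (h ha : List (Event T A V)) : Prop :=
  Equiv (complete h) ha ∧ ∀ o o' : T × ℕ, OpPrec (complete h) o o' → OpPrec ha o o'

/-- `ha` linearizes `h`: `lin(he, ha)` for some `he ∈ extend(h)`. -/
def Linearizes (ha h : List (Event T A V)) : Prop :=
  ∃ he, Extends h he ∧ Lin he ha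

/-- Prefix-closed set of histories. -/
def PrefixClosed (S : Set (List (Event T A V))) : Prop :=
  ∀ h ∈ S, ∀ h', h' <+: h → h' ∈ S

end Valid
end Histories
end TM

/-- Position in `h` of the response of operation call `o` (its transaction's
`(2 o.2 + 1)`-th event). -/
def TM.respPos {T A V : Type} [DecidableEq T]
    (h : List (TM.Event T A V)) (o : T × ℕ) : ℕ :=
  ((TM.txPositions h o.1)[2 * o.2 + 1]?).getD 0

/-- Position in `h` of the invocation of operation call `o` (its transaction's
`(2 o.2)`-th event). -/
def TM.invPos {T A V : Type} [DecidableEq T]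
    (h : List (TM.Event T A V)) (o : T × ℕ) : ℕ :=
  ((TM.txPositions h o.1)[2 * o.2]?).getD 0

/-- A mis-ordered pair: `o ≺≺_hs o'` but `o' ≺≺_hc o`. -/
def TM.MisOrdered {T A V : Type} [DecidableEq T]
    (hs hc : List (TM.Event T A V)) (o o' : T × ℕ) : Prop :=
  TM.OpPrec hs o o' ∧ TM.OpPrec hc o' o

section MainAux
open TM
namespace TMAux
open TM
set_option linter.unusedSectionVars false

variable {T A V : Type} [DecidableEq T]

lemma matches_tx {i r : Event T A V} (h : Matches i r) : i.tx = r.tx := by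
  cases h <;> rfl

lemma matches_resp {i r : Event T A V} (h : Matches i r) : r.isInv = false := by
  cases h <;> rfl

lemma alt_isInv {h : List (Event T A V)} (ha : Alternating h) :
    ∀ p (e : Event T A V), h[p]? = some e → (e.isInv = true ↔ p % 2 = 0) := by
  induction ha with
  | nil => intro p e hp; simp at hp
  | single a he =>
    intro p e hp
    match p with
    | 0 => simp at hp; subst hp; simp [he]
    | p+1 => simp at hp
  | cons i r rest hi hm hrest ih =>
    intro p e hp
    match p with
    | 0 => simp at hp; subst hp; simp [hi]
    | 1 =>
      simp at hp; subst hp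
      simp [matches_resp hm]
    | p+2 =>
      rw [List.getElem?_cons_succ, List.getElem?_cons_succ] at hp
      rw [ih p e hp]
      omega

lemma alt_pair {h : List (Event T A V)} (ha : Alternating h) :
    ∀ m (e : Event T A V), h[2*m+1]? = some e → ∃ i, h[2*m]? = some i ∧ Matches i e := by
  induction ha with
  | nil => intro m e hp; simp at hp
  | single a he =>
    intro m e hp
    rw [List.getElem?_eq_none (by simp only [List.length_singleton]; omega)] at hp
    simp at hp
  | cons i r rest hi hm hrest ih =>
    intro m e hp
    match m with
    | 0 =>
      simp at hp; subst hp
      exact ⟨i, by simp, hm⟩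
    | m+1 =>
      have h1 : 2*(m+1)+1 = (2*m+1)+1+1 := by ring
      rw [h1, List.getElem?_cons_succ, List.getElem?_cons_succ] at hp
      obtain ⟨i', hi', hm'⟩ := ih m e hp
      refine ⟨i', ?_, hm'⟩
      have h3 : 2*(m+1) = (2*m)+1+1 := by ring
      rw [h3, List.getElem?_cons_succ, List.getElem?_cons_succ]
      exact hi'

lemma txPos_pairwise (h : List (Event T A V)) (t : T) :
    (txPositions h t).Pairwise (· < ·) :=
  List.Pairwise.filter _ List.pairwise_lt_range

lemma pw_lt {l : List ℕ} (hl : l.Pairwise (· < ·)) {i j p q : ℕ}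
    (hi : l[i]? = some p) (hj : l[j]? = some q) (hij : i < j) : p < q := by
  obtain ⟨hi', rfl⟩ := List.getElem?_eq_some_iff.mp hi
  obtain ⟨hj', rfl⟩ := List.getElem?_eq_some_iff.mp hj
  exact List.pairwise_iff_getElem.mp hl i j hi' hj' hij

lemma pw_le {l : List ℕ} (hl : l.Pairwise (· < ·)) {i j p q : ℕ}
    (hi : l[i]? = some p) (hj : l[j]? = some q) (hpq : p < q) : i < j := by
  rcases lt_trichotomy i j with h | h | h
  · exact h
  · subst h; rw [hi] at hj; simp at hj; omega
  · exact absurd (pw_lt hl hj hi h) (by omega)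

lemma txPositions_cons (e : Event T A V) (h : List (Event T A V)) (t : T) :
    txPositions (e :: h) t =
      (if e.tx = t then [0] else []) ++ (txPositions h t).map (· + 1) := by
  unfold txPositions
  rw [List.length_cons, List.range_succ_eq_map, List.filter_cons, List.filter_map]
  have hpred : (fun i => decide (Option.map Event.tx (e :: h)[i]? = some t)) ∘ Nat.succ
      = (fun i => decide (Option.map Event.tx h[i]? = some t)) := by
    funext i
    simp [Function.comp]
  rw [hpred]
  by_cases hc : e.tx = t <;> simp [hc]

lemma txPositions_length (h : List (Event T A V)) (t : T) :
    (txPositions h t).length = (proj h t).length := by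
  induction h with
  | nil => rfl
  | cons e h ih =>
    rw [txPositions_cons]
    unfold proj
    rw [List.filter_cons]
    by_cases hc : e.tx = t <;> simp [hc, ih, proj]

lemma txPositions_get (h : List (Event T A V)) (t : T) :
    ∀ (i p : ℕ), (txPositions h t)[i]? = some p →
      ∃ e, h[p]? = some e ∧ e.tx = t ∧ (proj h t)[i]? = some e := by
  induction h with
  | nil => intro i p hp; simp [txPositions] at hp
  | cons a h ih =>
    intro i p hp
    rw [txPositions_cons] at hp
    by_cases hc : a.tx = t
    · rw [if_pos hc] at hp
      match i with
      | 0 =>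
        simp at hp; subst hp
        exact ⟨a, by simp, hc, by simp [proj, List.filter_cons, hc]⟩
      | i+1 =>
        rw [List.singleton_append, List.getElem?_cons_succ] at hp
        have hp' := hp
        rw [List.getElem?_map] at hp'
        obtain ⟨q, hq, hq1⟩ := Option.map_eq_some_iff.mp hp'
        obtain ⟨e, he, het, hpe⟩ := ih i q hq
        subst hq1
        refine ⟨e, by simpa using he, het, ?_⟩
        simpa [proj, List.filter_cons, hc] using hpe
    · rw [if_neg hc] at hp
      simp only [List.nil_append] at hp
      rw [List.getElem?_map] at hp
      obtain ⟨q, hq, hq1⟩ := Option.map_eq_some_iff.mp hp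
      obtain ⟨e, he, het, hpe⟩ := ih i q hq
      subst hq1
      refine ⟨e, by simpa using he, het, ?_⟩
      simpa [proj, List.filter_cons, hc] using hpe

lemma mem_txPositions {h : List (Event T A V)} {t : T} {p : ℕ} {e : Event T A V}
    (he : h[p]? = some e) (het : e.tx = t) : ∃ m : ℕ, (txPositions h t)[m]? = some p := by
  have hp : p ∈ txPositions h t := by
    unfold txPositions
    rw [List.mem_filter]
    refine ⟨?_, by simp [he, het]⟩
    rw [List.mem_range]
    obtain ⟨hlt, _⟩ := List.getElem?_eq_some_iff.mp he
    exact hlt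
  exact List.mem_iff_getElem?.mp hp

end TMAux

end MainAux
open TMAux in
/-- If some mis-ordered pair exists, then a mis-ordered pair `(o_t, o_t')`
minimizing the number of events strictly between `o_t` and `o_t'` in `hs`
has distinct transactions, and no event strictly between `o_t` and `o_t'`
in `hs` belongs to either of those transactions. -/
theorem minimal_misordered_pair {T A V : Type}
    [DecidableEq T] [DecidableEq A] [DecidableEq V] [Zero V]
    (hs hc : List (TM.Event T A V))
    (hwfs : TM.WellFormed hs) (hwfc : TM.WellFormed hc)
    (halts : TM.Alternating hs) (haltc : TM.Alternating hc)
    (hnps : TM.complete hs = hs) (hnpc : TM.complete hc = hc)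
    (heq : TM.Equiv hc hs)
    (hex : ∃ o o' : T × ℕ, TM.MisOrdered hs hc o o')
    (ot ot' : T × ℕ)
    (hmo : TM.MisOrdered hs hc ot ot')
    (hmin : ∀ p p' : T × ℕ, TM.MisOrdered hs hc p p' →
      TM.invPos hs ot' - TM.respPos hs ot - 1 ≤
        TM.invPos hs p' - TM.respPos hs p - 1) :
    ot.1 ≠ ot'.1 ∧
    ∀ k : ℕ, TM.respPos hs ot < k → k < TM.invPos hs ot' →
      ∀ e : TM.Event T A V, hs[k]? = some e → e.tx ≠ ot.1 ∧ e.tx ≠ ot'.1 := by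
  obtain ⟨t, k⟩ := ot
  obtain ⟨t', k'⟩ := ot'
  obtain ⟨⟨rs, is', hrs0, his0, hlt_s⟩, ⟨rc', ic, hrc0, hic0, hlt_c⟩⟩ := hmo
  have hrs : (TM.txPositions hs t)[2*k+1]? = some rs := hrs0
  have his' : (TM.txPositions hs t')[2*k']? = some is' := his0
  have hrc' : (TM.txPositions hc t')[2*k'+1]? = some rc' := hrc0
  have hic : (TM.txPositions hc t)[2*k]? = some ic := hic0
  have hpwst := txPos_pairwise hs t
  have hpwst' := txPos_pairwise hs t'
  have hpwct := txPos_pairwise hc t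
  have hpwct' := txPos_pairwise hc t'
  have htne : t ≠ t' := by
    rintro rfl
    have h1 : 2*k+1 < 2*k' := pw_le hpwst hrs his' hlt_s
    have h2 : 2*k'+1 < 2*k := pw_le hpwct hrc' hic hlt_c
    omega
  have hrespot : TM.respPos hs (t, k) = rs := by simp [TM.respPos, hrs]
  have hinvot' : TM.invPos hs (t', k') = is' := by simp [TM.invPos, his']
  obtain ⟨ers, hers, hers_tx, hers_proj⟩ := txPositions_get hs t (2*k+1) rs hrs
  obtain ⟨eis, heis, heis_tx, heis_proj⟩ := txPositions_get hs t' (2*k') is' his'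
  have hlenis : is' < hs.length := by
    obtain ⟨hlt, -⟩ := List.getElem?_eq_some_iff.mp heis; exact hlt
  have heis_inv : eis.isInv = true :=
    (alt_isInv (hwfs t').1 (2*k') eis heis_proj).mpr (by omega)
  have his'_even : is' % 2 = 0 := (alt_isInv halts is' eis heis).mp heis_inv
  have hlen : ∀ u : T, (TM.txPositions hc u).length = (TM.txPositions hs u).length :=
    fun u => by rw [txPositions_length, txPositions_length, heq u]
  have claimA : ∀ (x : ℕ) (e : TM.Event T A V), rs < x → x < is' → hs[x]? = some e →
      e.tx = t → x % 2 = 1 → False := by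
    intro x e hx1 hx2 hxe hext hxodd
    obtain ⟨m, hm⟩ := mem_txPositions hxe hext
    have hm1 : 2*k+1 < m := pw_le hpwst hrs hm hx1
    obtain ⟨e2, he2, -, hproj⟩ := txPositions_get hs t m x hm
    have he2e : e2 = e := by rw [hxe] at he2; exact (Option.some.inj he2).symm
    subst he2e
    have hresp : e2.isInv = false := by
      cases hb : e2.isInv
      · rfl
      · exact absurd ((alt_isInv halts x e2 hxe).mp hb) (by omega)
    have hmodd : m % 2 = 1 := by
      by_contra hcon
      have hco := (alt_isInv (hwfs t).1 m e2 hproj).mpr (by omega)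
      rw [hresp] at hco; exact Bool.noConfusion hco
    obtain ⟨j, hj⟩ : ∃ j : ℕ, m = 2*j+1 := ⟨m/2, by omega⟩
    rw [hj] at hm
    have hlen2 : 2*j < (TM.txPositions hc t).length := by
      obtain ⟨hlt, -⟩ := List.getElem?_eq_some_iff.mp hm
      rw [hlen t]; omega
    obtain ⟨y, hy⟩ : ∃ y : ℕ, (TM.txPositions hc t)[2*j]? = some y :=
      ⟨_, List.getElem?_eq_getElem hlen2⟩
    have hyic : ic < y := pw_lt hpwct hic hy (by omega)
    have hmis : TM.MisOrdered hs hc (t, j) (t', k') :=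
      ⟨⟨x, is', hm, his', hx2⟩, ⟨rc', y, hrc', hy, by omega⟩⟩
    have hle := hmin (t, j) (t', k') hmis
    have hxx : TM.respPos hs (t, j) = x := by simp [TM.respPos, hm]
    rw [hrespot, hinvot', hxx] at hle
    omega
  have claimB : ∀ (x : ℕ) (e : TM.Event T A V), rs < x → x < is' → hs[x]? = some e →
      e.tx = t' → x % 2 = 0 → False := by
    intro x e hx1 hx2 hxe hext hxeven
    obtain ⟨m, hm⟩ := mem_txPositions hxe hext
    have hm2 : m < 2*k' := pw_le hpwst' hm his' hx2
    have hinv : e.isInv = true := (alt_isInv halts x e hxe).mpr hxeven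
    obtain ⟨e2, he2, -, hproj⟩ := txPositions_get hs t' m x hm
    have he2e : e2 = e := by rw [hxe] at he2; exact (Option.some.inj he2).symm
    subst he2e
    have hmeven : m % 2 = 0 := (alt_isInv (hwfs t').1 m e2 hproj).mp hinv
    obtain ⟨j, hj⟩ : ∃ j : ℕ, m = 2*j := ⟨m/2, by omega⟩
    rw [hj] at hm
    have hlen2 : 2*j+1 < (TM.txPositions hc t').length := by
      obtain ⟨hlt, -⟩ := List.getElem?_eq_some_iff.mp hrc'
      omega
    obtain ⟨z, hz⟩ : ∃ z : ℕ, (TM.txPositions hc t')[2*j+1]? = some z :=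
      ⟨_, List.getElem?_eq_getElem hlen2⟩
    have hzrc : z < rc' := pw_lt hpwct' hz hrc' (by omega)
    have hmis : TM.MisOrdered hs hc (t, k) (t', j) :=
      ⟨⟨rs, x, hrs, hm, hx1⟩, ⟨z, ic, hz, hic, by omega⟩⟩
    have hle := hmin (t, k) (t', j) hmis
    have hxx : TM.invPos hs (t', j) = x := by simp [TM.invPos, hm]
    rw [hrespot, hinvot', hxx] at hle
    omega
  refine ⟨htne, ?_⟩
  intro x hx1 hx2 e hxe
  rw [hrespot] at hx1
  rw [hinvot'] at hx2
  constructor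
  · intro hext
    rcases Nat.mod_two_eq_zero_or_one x with hx0 | hx0
    · have hx1' : x + 1 < is' := by omega
      have hxlt : x + 1 < hs.length := by omega
      obtain ⟨r, hr⟩ : ∃ r, hs[x+1]? = some r := ⟨_, List.getElem?_eq_getElem hxlt⟩
      obtain ⟨m2, hm2eq⟩ : ∃ m2 : ℕ, x + 1 = 2*m2+1 := ⟨x/2, by omega⟩
      rw [hm2eq] at hr
      obtain ⟨i0, hi0, hmi0⟩ := alt_pair halts m2 r hr
      have hi0e : i0 = e := by
        rw [show 2*m2 = x by omega, hxe] at hi0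
        exact (Option.some.inj hi0).symm
      have hrtx : r.tx = t := by rw [← matches_tx hmi0, hi0e, hext]
      exact claimA (2*m2+1) r (by omega) (by omega) hr hrtx (by omega)
    · exact claimA x e hx1 hx2 hxe hext hx0
  · intro hext'
    rcases Nat.mod_two_eq_zero_or_one x with hx0 | hx0
    · exact claimB x e hx1 hx2 hxe hext' hx0
    · obtain ⟨m2, hm2eq⟩ : ∃ m2 : ℕ, x = 2*m2+1 := ⟨x/2, by omega⟩
      rw [hm2eq] at hxe
      obtain ⟨i0, hi0, hmi0⟩ := alt_pair halts m2 e hxe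
      have hi0tx : i0.tx = t' := by rw [matches_tx hmi0, hext']
      have h2m : rs < 2*m2 := by
        rcases Nat.lt_or_ge rs (2*m2) with h | h
        · exact h
        · exfalso
          have hrseq : rs = 2*m2 := by omega
          rw [← hrseq] at hi0
          have hie : i0 = ers := by rw [hers] at hi0; exact (Option.some.inj hi0).symm
          rw [hie, hers_tx] at hi0tx
          exact htne hi0tx
      exact claimB (2*m2) i0 h2m (by omega) hi0 hi0tx (by omega)
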